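/- Let U ∈ B(H), and Φ, Ψ frames in H. If the U-cross Gram matrix G_{U,Φ,Ψ} equals the identity on ℓ², then Φ and Ψ are Riesz bases, Φ̃ = UΨ (i.e. Φ = S_Φ U Ψ), Ψ = S_Ψ U* Φ, and U = T_{Φ̃} T_{Ψ̃}* is invertible. Conversely, if these hold, G_{U,Φ,Ψ} = I. -/

import Mathlib

open ContinuousLinearMap

noncomputable section

/-- ℓ² over a countable index set. -/
abbrev L2 : Type := lp (fun _ : ℕ => ℂ) 2

private lemma adjoint_inj_aux {H : Type} [NormedAddCommGroup H] [InnerProductSpace ℂ H]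
    [CompleteSpace H] (T : L2 →L[ℂ] H) {A : ℝ} (hA : 0 < A)
    (hlow : ∀ f : H, A * ‖f‖ ^ 2 ≤ ‖adjoint T f‖ ^ 2) :
    Function.Injective ⇑(adjoint T) := by
  intro f g hfg
  rw [← sub_eq_zero]
  have h := hlow (f - g)
  rw [map_sub, hfg, sub_self] at h
  simp only [norm_zero] at h
  have hnorm : ‖f - g‖ = 0 := by
    by_contra hne
    have hpos : 0 < ‖f - g‖ := lt_of_le_of_ne (norm_nonneg _) (Ne.symm hne)
    nlinarith [mul_pos hpos hpos]
  exact norm_eq_zero.mp hnorm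

private lemma surj_aux {H : Type} [NormedAddCommGroup H] [InnerProductSpace ℂ H]
    [CompleteSpace H] (T : L2 →L[ℂ] H) {A : ℝ} (hA : 0 < A)
    (hlow : ∀ f : H, A * ‖f‖ ^ 2 ≤ ‖adjoint T f‖ ^ 2) :
    Function.Surjective ⇑T := by
  set S : H →L[ℂ] H := T ∘L adjoint T with hSdef
  have hinner : ∀ f : H, (inner ℂ (S f) f : ℂ) = (‖adjoint T f‖ : ℂ) ^ 2 := by
    intro f
    have h1 : (inner ℂ (S f) f : ℂ) = inner ℂ (adjoint T f) (adjoint T f) := by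
      have : S f = T (adjoint T f) := rfl
      rw [this]
      nth_rewrite 1 [← ContinuousLinearMap.adjoint_adjoint T]
      rw [ContinuousLinearMap.adjoint_inner_left]
    rw [h1]
    exact_mod_cast inner_self_eq_norm_sq_to_K _
  have hbound : ∀ f : H, A * ‖f‖ ^ 2 ≤ ‖S f‖ * ‖f‖ := by
    intro f
    calc A * ‖f‖ ^ 2 ≤ ‖adjoint T f‖ ^ 2 := hlow f
      _ = ‖(inner ℂ (S f) f : ℂ)‖ := by rw [hinner f]; simp [norm_pow]
      _ ≤ ‖S f‖ * ‖f‖ := norm_inner_le_norm _ _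
  have hanti : AntilipschitzWith (A⁻¹).toNNReal ⇑S := by
    apply ContinuousLinearMap.antilipschitz_of_bound
    intro f
    rw [Real.coe_toNNReal _ (le_of_lt (inv_pos.mpr hA))]
    rcases eq_or_ne f 0 with rfl | hf
    · simp
    · have hfpos : 0 < ‖f‖ := norm_pos_iff.mpr hf
      have := hbound f
      rw [inv_mul_eq_div, le_div_iff₀ hA]
      nlinarith
  have hclosed : IsClosed (Set.range ⇑S) := hanti.isClosed_range S.uniformContinuous
  set K : Submodule ℂ H := LinearMap.range (S : H →ₗ[ℂ] H) with hKdef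
  have hKclosed : IsClosed (K : Set H) := by
    have : (K : Set H) = Set.range ⇑S := by
      ext x; simp [hKdef, LinearMap.mem_range, Set.mem_range]
    rw [this]; exact hclosed
  have horth : Kᗮ = ⊥ := by
    rw [Submodule.eq_bot_iff]
    intro x hx
    have hmem : S x ∈ K := LinearMap.mem_range_self _ x
    have h0 : (inner ℂ (S x) x : ℂ) = 0 := (Submodule.mem_orthogonal K x).mp hx (S x) hmem
    rw [hinner x] at h0
    have hsq : ‖adjoint T x‖ ^ 2 = 0 := by exact_mod_cast h0
    have hb := hlow x
    rw [hsq] at hb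
    have hnx : ‖x‖ = 0 := by
      by_contra hne
      have hpos : 0 < ‖x‖ := lt_of_le_of_ne (norm_nonneg _) (Ne.symm hne)
      nlinarith [mul_pos hpos hpos]
    exact norm_eq_zero.mp hnx
  haveI : CompleteSpace K := hKclosed.completeSpace_coe
  have hKtop : K = ⊤ := Submodule.orthogonal_eq_bot_iff.mp horth
  intro z
  have hz : z ∈ K := by rw [hKtop]; trivial
  obtain ⟨w, hw⟩ := hz
  exact ⟨adjoint T w, hw⟩

/-- for frames `Φ, Ψ`, `G_{U,Φ,Ψ} = I` iff `Φ, Ψ` are Riesz bases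
(synthesis operators bijective), `Φ = S_Φ U Ψ`, `Ψ = S_Ψ U* Φ`, `U` is invertible and
`U = T_{Φ̃} T_{Ψ̃}*` (equivalently `S_Φ U S_Ψ = TΦ TΨ*`). -/
theorem stmt_10
    {H : Type} [NormedAddCommGroup H] [InnerProductSpace ℂ H] [CompleteSpace H]
    (Φ Ψ : ℕ → H) (AΦ AΨ : ℝ) (hAΦ : 0 < AΦ) (hAΨ : 0 < AΨ)
    (TΦ TΨ : L2 →L[ℂ] H)
    (hΦ : ∀ i, TΦ (lp.single 2 i 1) = Φ i)
    (hΨ : ∀ i, TΨ (lp.single 2 i 1) = Ψ i)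
    (hlowΦ : ∀ f : H, AΦ * ‖f‖ ^ 2 ≤ ‖adjoint TΦ f‖ ^ 2)
    (hlowΨ : ∀ f : H, AΨ * ‖f‖ ^ 2 ≤ ‖adjoint TΨ f‖ ^ 2)
    (U : H →L[ℂ] H) :
    (adjoint TΦ ∘L U ∘L TΨ = ContinuousLinearMap.id ℂ L2) ↔
      (Function.Bijective ⇑TΦ ∧ Function.Bijective ⇑TΨ ∧
        (∀ i, Φ i = (TΦ ∘L adjoint TΦ) (U (Ψ i))) ∧
        (∀ i, Ψ i = (TΨ ∘L adjoint TΨ) (adjoint U (Φ i))) ∧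
        Function.Bijective ⇑U ∧
        (TΦ ∘L adjoint TΦ) ∘L U ∘L (TΨ ∘L adjoint TΨ) = TΦ ∘L adjoint TΨ) := by
  constructor
  · intro hG
    have hGfun : ∀ z : L2, adjoint TΦ (U (TΨ z)) = z := by
      intro z
      have := congrArg (fun (A : L2 →L[ℂ] L2) => A z) hG
      simpa using this
    have hG' : adjoint TΨ ∘L adjoint U ∘L TΦ = ContinuousLinearMap.id ℂ L2 := by
      have h := congrArg ContinuousLinearMap.adjoint hG
      rw [ContinuousLinearMap.adjoint_comp, ContinuousLinearMap.adjoint_comp,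
        ContinuousLinearMap.adjoint_adjoint, ContinuousLinearMap.adjoint_id] at h
      rw [← h]
      ext z
      simp [ContinuousLinearMap.comp_apply]
    have hG'fun : ∀ z : L2, adjoint TΨ (adjoint U (TΦ z)) = z := by
      intro z
      have := congrArg (fun (A : L2 →L[ℂ] L2) => A z) hG'
      simpa using this
    have hsurjΦ : Function.Surjective ⇑TΦ := surj_aux TΦ hAΦ hlowΦ
    have hsurjΨ : Function.Surjective ⇑TΨ := surj_aux TΨ hAΨ hlowΨ
    have hinjΦ : Function.Injective ⇑TΦ := by
      intro a b hab
      have ha := hG'fun a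
      rw [hab, hG'fun b] at ha
      exact ha.symm
    have hinjΨ : Function.Injective ⇑TΨ := by
      intro a b hab
      have ha := hGfun a
      rw [hab, hGfun b] at ha
      exact ha.symm
    have hadjΦinj : Function.Injective ⇑(adjoint TΦ) := adjoint_inj_aux TΦ hAΦ hlowΦ
    refine ⟨⟨hinjΦ, hsurjΦ⟩, ⟨hinjΨ, hsurjΨ⟩, ?_, ?_, ⟨?_, ?_⟩, ?_⟩
    · intro i
      rw [← hΦ i, ← hΨ i]
      have := congrArg (⇑TΦ) (hGfun (lp.single 2 i 1))
      simpa [ContinuousLinearMap.comp_apply] using this.symm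
    · intro i
      rw [← hΦ i, ← hΨ i]
      have := congrArg (⇑TΨ) (hG'fun (lp.single 2 i 1))
      simpa [ContinuousLinearMap.comp_apply] using this.symm
    · -- U injective
      intro a b hab
      obtain ⟨x, rfl⟩ := hsurjΨ a
      obtain ⟨y, rfl⟩ := hsurjΨ b
      have hx := hGfun x
      rw [hab, hGfun y] at hx
      rw [hx]
    · -- U surjective
      intro z
      refine ⟨TΨ (adjoint TΦ z), ?_⟩
      apply hadjΦinj
      exact hGfun (adjoint TΦ z)
    · ext z
      simp only [ContinuousLinearMap.comp_apply]
      exact congrArg (⇑TΦ) (hGfun (adjoint TΨ z))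
  · rintro ⟨hbΦ, hbΨ, h1, h2, hU, h3⟩
    -- adjoint TΨ is surjective
    have hker : LinearMap.ker (TΨ : L2 →ₗ[ℂ] H) = ⊥ := LinearMap.ker_eq_bot.mpr hbΨ.1
    have hrange : LinearMap.range (TΨ : L2 →ₗ[ℂ] H) = ⊤ := LinearMap.range_eq_top.mpr hbΨ.2
    set e := ContinuousLinearEquiv.ofBijective TΨ hker hrange with hedef
    set g : H →L[ℂ] L2 := (e.symm : H →L[ℂ] L2) with hgdef
    have hgT : g ∘L TΨ = ContinuousLinearMap.id ℂ L2 := by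
      refine ContinuousLinearMap.ext fun z => ?_
      simp only [ContinuousLinearMap.comp_apply, ContinuousLinearMap.id_apply]
      exact ContinuousLinearEquiv.ofBijective_symm_apply_apply TΨ hker hrange z
    have hadj : adjoint TΨ ∘L adjoint g = ContinuousLinearMap.id ℂ L2 := by
      rw [← ContinuousLinearMap.adjoint_comp, hgT, ContinuousLinearMap.adjoint_id]
    have hsurjadjΨ : Function.Surjective ⇑(adjoint TΨ) := by
      intro z
      refine ⟨adjoint g z, ?_⟩
      have := congrArg (fun (A : L2 →L[ℂ] L2) => A z) hadj
      simpa using this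
    refine ContinuousLinearMap.ext fun z => ?_
    obtain ⟨w, rfl⟩ := hsurjadjΨ z
    have h3w := congrArg (fun (A : H →L[ℂ] H) => A w) h3
    simp only [ContinuousLinearMap.comp_apply] at h3w
    have := hbΦ.1 h3w
    simpa [ContinuousLinearMap.comp_apply] using this
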